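/- arXiv:2411.02923 — 2 statements merged into one kernel-verified Lean document; each statement's English description precedes it below -/
import Mathlib

section
/- Let ℓ, T > 0. Let k₁ : [0,ℓ] → ℝ be continuous with k₁(x) ≥ C₀ for some C₀ > 0; let φ : [0,ℓ] → ℝ; let λ, λ_w, Λ : ℝ → ℝ with λ continuous and λ(η) ≥ c₁ > 0 for all η, and with b := λ_w/λ continuously differentiable; let Q̂ : [0,ℓ] × [0,T] → ℝ be continuous and q₀, qℓ : [0,T] → ℝ. Suppose p₀, s₀ : [0,ℓ] × [0,T] → ℝ are such that, for each t ∈ [0,T], p₀(·,t) and s₀(·,t) are continuously differentiable on [0,ℓ], the maps x ↦ λ(s₀(x,t)) k₁(x) ∂_x p₀(x,t) and x ↦ Λ(s₀(x,t)) k₁(x) ∂_x s₀(x,t) are differentiable in x, ∂_t s₀ exists, and: (i) ∂_x(λ(s₀) k₁ ∂_x p₀)(x,t) = Q̂(x,t) for all x ∈ [0,ℓ], with p₀(0,t) = q₀(t) and p₀(ℓ,t) = qℓ(t); (ii) φ(x) ∂_t s₀(x,t) = ∂_x(Λ(s₀) k₁ ∂_x s₀ + λ_w(s₀) k₁ ∂_x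 p₀)(x,t) - b(s₀(x,t)) Q̂(x,t) for all x ∈ (0,ℓ). Then for all (x₁,t) ∈ (0,ℓ) × [0,T]: φ(x₁) ∂_t s₀(x₁,t) = ∂_x(Λ(s₀) k₁ ∂_x s₀)(x₁,t) + a(x₁,t) ∂_x s₀(x₁,t), where a(x₁,t) := b'(s₀(x₁,t)) · ( ∫_0^{x₁} Q̂(ς,t) dς + ( qℓ(t) - q₀(t) - ∫_0^ℓ (1/(λ(s₀(η,t)) k₁(η))) (∫_0^η Q̂(ς,t) dς) dη ) / ( ∫_0^ℓ dη/(λ(s₀(η,t)) k₁(η)) ) ). -/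
open Set

theorem statement7 (ℓ T : ℝ) (hl : 0 < ℓ) (hT : 0 < T)
    (k₁ : ℝ → ℝ) (hk₁c : ContinuousOn k₁ (Icc 0 ℓ))
    (C₀ : ℝ) (hC₀ : 0 < C₀) (hk₁ : ∀ x ∈ Icc (0:ℝ) ℓ, C₀ ≤ k₁ x)
    (φ : ℝ → ℝ)
    (lam lw Lam : ℝ → ℝ) (hlam : Continuous lam)
    (c₁ : ℝ) (hc₁ : 0 < c₁) (hlampos : ∀ η : ℝ, c₁ ≤ lam η)
    (b : ℝ → ℝ) (hbdef : ∀ s : ℝ, b s = lw s / lam s) (hb : ContDiff ℝ 1 b)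
    (Qh : ℝ → ℝ → ℝ)
    (hQh : ContinuousOn (fun q : ℝ × ℝ => Qh q.1 q.2) (Icc 0 ℓ ×ˢ Icc 0 T))
    (q₀ qℓ : ℝ → ℝ)
    (p₀ s₀ px sx st : ℝ → ℝ → ℝ)
    (hpx : ∀ t ∈ Icc (0:ℝ) T, ∀ x ∈ Icc (0:ℝ) ℓ,
      HasDerivWithinAt (fun y => p₀ y t) (px x t) (Icc 0 ℓ) x)
    (hpxc : ∀ t ∈ Icc (0:ℝ) T, ContinuousOn (fun x => px x t) (Icc 0 ℓ))
    (hsx : ∀ t ∈ Icc (0:ℝ) T, ∀ x ∈ Icc (0:ℝ) ℓ,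
      HasDerivWithinAt (fun y => s₀ y t) (sx x t) (Icc 0 ℓ) x)
    (hsxc : ∀ t ∈ Icc (0:ℝ) T, ContinuousOn (fun x => sx x t) (Icc 0 ℓ))
    (hst : ∀ t ∈ Icc (0:ℝ) T, ∀ x ∈ Icc (0:ℝ) ℓ,
      HasDerivWithinAt (fun τ => s₀ x τ) (st x t) (Icc 0 T) t)
    (hell : ∀ t ∈ Icc (0:ℝ) T, ∀ x ∈ Icc (0:ℝ) ℓ,
      HasDerivWithinAt (fun y => lam (s₀ y t) * k₁ y * px y t) (Qh x t) (Icc 0 ℓ) x)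
    (hbc0 : ∀ t ∈ Icc (0:ℝ) T, p₀ 0 t = q₀ t)
    (hbcl : ∀ t ∈ Icc (0:ℝ) T, p₀ ℓ t = qℓ t)
    (Gx : ℝ → ℝ → ℝ)
    (hGx : ∀ t ∈ Icc (0:ℝ) T, ∀ x ∈ Icc (0:ℝ) ℓ,
      HasDerivWithinAt
        (fun y => Lam (s₀ y t) * k₁ y * sx y t + lw (s₀ y t) * k₁ y * px y t)
        (Gx x t) (Icc 0 ℓ) x)
    (hpar : ∀ t ∈ Icc (0:ℝ) T, ∀ x ∈ Ioo (0:ℝ) ℓ,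
      φ x * st x t = Gx x t - b (s₀ x t) * Qh x t)
    (A : ℝ → ℝ → ℝ)
    (hA : ∀ x t : ℝ, A x t = deriv b (s₀ x t) *
      ((∫ ς in (0:ℝ)..x, Qh ς t) +
        (qℓ t - q₀ t -
          ∫ η in (0:ℝ)..ℓ, (1 / (lam (s₀ η t) * k₁ η)) * ∫ ς in (0:ℝ)..η, Qh ς t) /
          (∫ η in (0:ℝ)..ℓ, 1 / (lam (s₀ η t) * k₁ η)))) :
    ∀ t ∈ Icc (0:ℝ) T, ∀ x₁ ∈ Ioo (0:ℝ) ℓ,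
      HasDerivWithinAt (fun y => Lam (s₀ y t) * k₁ y * sx y t)
        (φ x₁ * st x₁ t - A x₁ t * sx x₁ t) (Icc 0 ℓ) x₁ := by

  intro t ht x₁ hx₁
  have hx₁' : x₁ ∈ Icc (0:ℝ) ℓ := Ioo_subset_Icc_self hx₁
  set F : ℝ → ℝ := fun y => lam (s₀ y t) * k₁ y * px y t with hF
  have hs₀c : ContinuousOn (fun y => s₀ y t) (Icc 0 ℓ) :=
    fun x hx => (hsx t ht x hx).continuousWithinAt
  have hFc : ContinuousOn F (Icc 0 ℓ) :=
    ((hlam.comp_continuousOn hs₀c).mul hk₁c).mul (hpxc t ht)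
  have hQc : ContinuousOn (fun x => Qh x t) (Icc 0 ℓ) := by
    have : ContinuousOn (fun x : ℝ => ((x, t) : ℝ × ℝ)) (Icc 0 ℓ) :=
      (continuous_id.prodMk continuous_const).continuousOn
    exact hQh.comp this (fun x hx => ⟨hx, ht⟩)
  have hlamne : ∀ y : ℝ, lam y ≠ 0 := fun y => ne_of_gt (hc₁.trans_le (hlampos y))
  have hk₁ne : ∀ x ∈ Icc (0:ℝ) ℓ, k₁ x ≠ 0 := fun x hx => ne_of_gt (hC₀.trans_le (hk₁ x hx))
  have hgpos : ∀ η ∈ Icc (0:ℝ) ℓ, 0 < lam (s₀ η t) * k₁ η := fun η hη =>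
    mul_pos (hc₁.trans_le (hlampos _)) (hC₀.trans_le (hk₁ η hη))
  -- FTC for F
  have key : ∀ x ∈ Icc (0:ℝ) ℓ, (∫ ς in (0:ℝ)..x, Qh ς t) = F x - F 0 := by
    intro x hx
    apply intervalIntegral.integral_eq_sub_of_hasDeriv_right_of_le hx.1
    · exact hFc.mono (Icc_subset_Icc le_rfl hx.2)
    · intro y hy
      have hyI : y ∈ Icc (0:ℝ) ℓ := ⟨hy.1.le, (hy.2.trans_le hx.2).le⟩
      have hnb : Icc (0:ℝ) ℓ ∈ nhds y := Icc_mem_nhds hy.1 (hy.2.trans_le hx.2)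
      exact ((hell t ht y hyI).hasDerivAt hnb).hasDerivWithinAt
    · exact (hQc.mono (Icc_subset_Icc le_rfl hx.2)).intervalIntegrable_of_Icc hx.1
  -- FTC for p₀
  have keyp : (∫ η in (0:ℝ)..ℓ, px η t) = qℓ t - q₀ t := by
    rw [← hbc0 t ht, ← hbcl t ht]
    apply intervalIntegral.integral_eq_sub_of_hasDeriv_right_of_le hl.le
    · exact fun x hx => (hpx t ht x hx).continuousWithinAt
    · intro y hy
      have hnb : Icc (0:ℝ) ℓ ∈ nhds y := Icc_mem_nhds hy.1 hy.2
      exact ((hpx t ht y (Ioo_subset_Icc_self hy)).hasDerivAt hnb).hasDerivWithinAt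
    · exact (hpxc t ht).intervalIntegrable_of_Icc hl.le
  have hgc : ContinuousOn (fun η => 1 / (lam (s₀ η t) * k₁ η)) (Icc 0 ℓ) := by
    apply ContinuousOn.div continuousOn_const ((hlam.comp_continuousOn hs₀c).mul hk₁c)
    exact fun η hη => ne_of_gt (hgpos η hη)
  have hI1 : IntervalIntegrable (fun η => 1 / (lam (s₀ η t) * k₁ η)) MeasureTheory.volume 0 ℓ :=
    hgc.intervalIntegrable_of_Icc hl.le
  have hI2 : IntervalIntegrable (fun η => 1 / (lam (s₀ η t) * k₁ η) * (F η - F 0))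
      MeasureTheory.volume 0 ℓ :=
    (hgc.mul (hFc.sub continuousOn_const)).intervalIntegrable_of_Icc hl.le
  set I : ℝ := ∫ η in (0:ℝ)..ℓ, 1 / (lam (s₀ η t) * k₁ η) with hIdef
  have hIpos : 0 < I := by
    apply intervalIntegral.intervalIntegral_pos_of_pos_on hI1 _ hl
    intro η hη
    exact one_div_pos.mpr (hgpos η (Ioo_subset_Icc_self hη))
  -- express ∫ px in terms of F 0
  have hsplit : qℓ t - q₀ t =
      (∫ η in (0:ℝ)..ℓ, 1 / (lam (s₀ η t) * k₁ η) * (F η - F 0)) + F 0 * I := by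
    rw [← keyp, hIdef, ← intervalIntegral.integral_const_mul, ← intervalIntegral.integral_add hI2
      (hI1.const_mul (F 0))]
    apply intervalIntegral.integral_congr
    intro η hη
    rw [uIcc_of_le hl.le] at hη
    have h1 : lam (s₀ η t) ≠ 0 := hlamne _
    have h2 : k₁ η ≠ 0 := hk₁ne η hη
    simp only [hF]
    field_simp
    ring
  have hJeq : (∫ η in (0:ℝ)..ℓ, 1 / (lam (s₀ η t) * k₁ η) * ∫ ς in (0:ℝ)..η, Qh ς t)
      = ∫ η in (0:ℝ)..ℓ, 1 / (lam (s₀ η t) * k₁ η) * (F η - F 0) := by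
    apply intervalIntegral.integral_congr
    intro η hη
    rw [uIcc_of_le hl.le] at hη
    simp only [key η hη]
  have hF0 : F 0 = (qℓ t - q₀ t -
      ∫ η in (0:ℝ)..ℓ, 1 / (lam (s₀ η t) * k₁ η) * ∫ ς in (0:ℝ)..η, Qh ς t) / I := by
    rw [hJeq, eq_div_iff (ne_of_gt hIpos)]
    linarith [hsplit]
  have hAval : A x₁ t = deriv b (s₀ x₁ t) * F x₁ := by
    rw [hA, ← hIdef, ← hF0, key x₁ hx₁']
    ring
  -- derivative of H = b ∘ s₀ * F
  have hbd : HasDerivAt b (deriv b (s₀ x₁ t)) (s₀ x₁ t) :=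
    ((hb.differentiable one_ne_zero) (s₀ x₁ t)).hasDerivAt
  have hbs : HasDerivWithinAt (fun y => b (s₀ y t)) (deriv b (s₀ x₁ t) * sx x₁ t)
      (Icc 0 ℓ) x₁ := hbd.comp_hasDerivWithinAt x₁ (hsx t ht x₁ hx₁')
  have hH : HasDerivWithinAt (fun y => b (s₀ y t) * F y)
      (deriv b (s₀ x₁ t) * sx x₁ t * F x₁ + b (s₀ x₁ t) * Qh x₁ t) (Icc 0 ℓ) x₁ :=
    hbs.mul (hell t ht x₁ hx₁')
  have hGH : HasDerivWithinAt (fun y => Lam (s₀ y t) * k₁ y * sx y t)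
      (Gx x₁ t - (deriv b (s₀ x₁ t) * sx x₁ t * F x₁ + b (s₀ x₁ t) * Qh x₁ t))
      (Icc 0 ℓ) x₁ := by
    have h := (hGx t ht x₁ hx₁').sub hH
    have hfun : ∀ y : ℝ, (Lam (s₀ y t) * k₁ y * sx y t + lw (s₀ y t) * k₁ y * px y t)
        - b (s₀ y t) * F y = Lam (s₀ y t) * k₁ y * sx y t := by
      intro y
      have hthis : b (s₀ y t) * lam (s₀ y t) = lw (s₀ y t) := by
        rw [hbdef, div_mul_cancel₀ _ (hlamne _)]
      simp only [hF]
      linear_combination -(k₁ y * px y t) * hthis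
    simpa only [Pi.sub_def, hfun] using h
  have hval : Gx x₁ t - (deriv b (s₀ x₁ t) * sx x₁ t * F x₁ + b (s₀ x₁ t) * Qh x₁ t)
      = φ x₁ * st x₁ t - A x₁ t * sx x₁ t := by
    have hp := hpar t ht x₁ hx₁
    rw [hAval]
    linarith [hp]
  rwa [hval] at hGH
end

section
/- Let ℓ, T > 0 and let φ : [0,ℓ] → ℝ be continuous with φ(x) ≥ c₀ for some c₀ > 0. Let D, A₁, A₃ : [0,ℓ] × [0,T] → ℝ and A₂ : [0,ℓ] × [0,ℓ] × [0,T] → ℝ be continuous, with D(x,t) ≥ c for some c > 0. Let s : [0,ℓ] × [0,T] → ℝ be continuous such that the partial derivatives ∂_t s and ∂_x s exist and are continuous on [0,ℓ] × [0,T], the flux G(x,t) := D(x,t) ∂_x s(x,t) + A₁(x,t) s(x,t) has a continuous partial derivative ∂_x G on [0,ℓ] × [0,T], and such that for every (x,t) ∈ (0,ℓ) × (0,T]: φ(x) ∂_t s(x,t) = ∂_x G(x,t) + ∫_0^ℓ A₂(x,η,t) s(η,t) dη + A₃(x,t) s(x,t), with s(0,t) = s(ℓ,t) = 0 for every t ∈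 [0,T] and s(x,0) = 0 for every x ∈ [0,ℓ]. Then s is identically zero on [0,ℓ] × [0,T]. -/
open Set MeasureTheory

/-- Tietze extension helper: extend a function continuous on a closed set to a globally
continuous function. -/
lemma statement9_ext {X : Type*} [TopologicalSpace X] [NormalSpace X] {s : Set X}
    (hs : IsClosed s) {f : X → ℝ} (hf : ContinuousOn f s) :
    ∃ g : X → ℝ, Continuous g ∧ ∀ p ∈ s, g p = f p := by
  obtain ⟨g, hg⟩ := ContinuousMap.exists_restrict_eq (Y := ℝ) hs ⟨s.restrict f, hf.restrict⟩
  refine ⟨g, g.continuous, fun p hp => ?_⟩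
  have := congrFun (congrArg ContinuousMap.toFun hg) ⟨p, hp⟩
  exact this

/-- Pointwise quadratic estimate used for the diffusion/advection term. -/
lemma statement9_quad1 {a b d q c M : ℝ} (hc : 0 < c) (hd : c ≤ d) (hq : |q| ≤ M) :
    -2 * (a * (d * a + q * b)) ≤ M ^ 2 / c * b ^ 2 := by
  rw [div_mul_eq_mul_div, le_div_iff₀ hc]
  have hA : -(q * (b * a)) ≤ M * (|b| * |a|) := by
    calc -(q * (b * a)) ≤ |q * (b * a)| := neg_le_abs _
      _ = |q| * (|b| * |a|) := by rw [abs_mul, abs_mul]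
      _ ≤ M * (|b| * |a|) := by
          apply mul_le_mul_of_nonneg_right hq (by positivity)
  have hA' : 2 * c * -(q * (b * a)) ≤ 2 * c * (M * (|b| * |a|)) :=
    mul_le_mul_of_nonneg_left hA (by positivity)
  have hB : 2 * c * (M * (|b| * |a|)) ≤ c ^ 2 * a ^ 2 + M ^ 2 * b ^ 2 := by
    nlinarith [sq_nonneg (c * |a| - M * |b|), sq_abs a, sq_abs b]
  have hC : c * (c * a ^ 2) ≤ c * (d * a ^ 2) :=
    mul_le_mul_of_nonneg_left (mul_le_mul_of_nonneg_right hd (sq_nonneg a)) hc.le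
  nlinarith [hA', hB, hC, sq_nonneg (c * a)]

/-- Pointwise quadratic estimate used for the nonlocal term. -/
lemma statement9_quad2 {a b q M : ℝ} (hq : |q| ≤ M) :
    2 * a * (q * b) ≤ M * (a ^ 2 + b ^ 2) := by
  have hA : 2 * a * (q * b) ≤ 2 * (|a| * (M * |b|)) := by
    calc 2 * a * (q * b) ≤ |2 * a * (q * b)| := le_abs_self _
      _ = 2 * (|a| * (|q| * |b|)) := by
          rw [abs_mul, abs_mul, abs_mul]
          simp [abs_two]; ring
      _ ≤ 2 * (|a| * (M * |b|)) := by
          have h0 : (0:ℝ) ≤ M := le_trans (abs_nonneg q) hq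
          have := mul_le_mul_of_nonneg_right hq (abs_nonneg b)
          nlinarith [abs_nonneg a]
  nlinarith [sq_nonneg (|a| - |b|), sq_abs a, sq_abs b, hA, le_trans (abs_nonneg q) hq]

theorem statement9 (ℓ T : ℝ) (hl : 0 < ℓ) (hT : 0 < T)
    (φ : ℝ → ℝ) (hφc : ContinuousOn φ (Icc 0 ℓ))
    (c₀ : ℝ) (hc₀ : 0 < c₀) (hφ : ∀ x ∈ Icc (0:ℝ) ℓ, c₀ ≤ φ x)
    (D A₁ A₃ : ℝ → ℝ → ℝ) (A₂ : ℝ → ℝ → ℝ → ℝ)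
    (hDc : ContinuousOn (fun q : ℝ × ℝ => D q.1 q.2) (Icc 0 ℓ ×ˢ Icc 0 T))
    (hA₁c : ContinuousOn (fun q : ℝ × ℝ => A₁ q.1 q.2) (Icc 0 ℓ ×ˢ Icc 0 T))
    (hA₃c : ContinuousOn (fun q : ℝ × ℝ => A₃ q.1 q.2) (Icc 0 ℓ ×ˢ Icc 0 T))
    (hA₂c : ContinuousOn (fun q : ℝ × ℝ × ℝ => A₂ q.1 q.2.1 q.2.2)
      (Icc 0 ℓ ×ˢ Icc 0 ℓ ×ˢ Icc 0 T))
    (c : ℝ) (hc : 0 < c)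
    (hDpos : ∀ x ∈ Icc (0:ℝ) ℓ, ∀ t ∈ Icc (0:ℝ) T, c ≤ D x t)
    (s st sx Gx : ℝ → ℝ → ℝ)
    (hsc : ContinuousOn (fun q : ℝ × ℝ => s q.1 q.2) (Icc 0 ℓ ×ˢ Icc 0 T))
    (hst : ∀ x ∈ Icc (0:ℝ) ℓ, ∀ t ∈ Icc (0:ℝ) T,
      HasDerivWithinAt (fun τ => s x τ) (st x t) (Icc 0 T) t)
    (hstc : ContinuousOn (fun q : ℝ × ℝ => st q.1 q.2) (Icc 0 ℓ ×ˢ Icc 0 T))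
    (hsx : ∀ x ∈ Icc (0:ℝ) ℓ, ∀ t ∈ Icc (0:ℝ) T,
      HasDerivWithinAt (fun y => s y t) (sx x t) (Icc 0 ℓ) x)
    (hsxc : ContinuousOn (fun q : ℝ × ℝ => sx q.1 q.2) (Icc 0 ℓ ×ˢ Icc 0 T))
    (hGx : ∀ x ∈ Icc (0:ℝ) ℓ, ∀ t ∈ Icc (0:ℝ) T,
      HasDerivWithinAt (fun y => D y t * sx y t + A₁ y t * s y t) (Gx x t) (Icc 0 ℓ) x)
    (hGxc : ContinuousOn (fun q : ℝ × ℝ => Gx q.1 q.2) (Icc 0 ℓ ×ˢ Icc 0 T))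
    (heq : ∀ x ∈ Ioo (0:ℝ) ℓ, ∀ t ∈ Ioc (0:ℝ) T,
      φ x * st x t = Gx x t + (∫ η in (0:ℝ)..ℓ, A₂ x η t * s η t) + A₃ x t * s x t)
    (hbc : ∀ t ∈ Icc (0:ℝ) T, s 0 t = 0 ∧ s ℓ t = 0)
    (hic : ∀ x ∈ Icc (0:ℝ) ℓ, s x 0 = 0) :
    ∀ x ∈ Icc (0:ℝ) ℓ, ∀ t ∈ Icc (0:ℝ) T, s x t = 0 := by
  have hl' : (0:ℝ) ≤ ℓ := hl.le
  have hT' : (0:ℝ) ≤ T := hT.le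
  have h0ℓ : (0:ℝ) ∈ Icc (0:ℝ) ℓ := ⟨le_refl 0, hl'⟩
  have h0T : (0:ℝ) ∈ Icc (0:ℝ) T := ⟨le_refl 0, hT'⟩
  have hKc : IsCompact (Icc (0:ℝ) ℓ ×ˢ Icc (0:ℝ) T) := isCompact_Icc.prod isCompact_Icc
  have hK3c : IsCompact (Icc (0:ℝ) ℓ ×ˢ Icc (0:ℝ) ℓ ×ˢ Icc (0:ℝ) T) :=
    isCompact_Icc.prod (isCompact_Icc.prod isCompact_Icc)
  -- continuous extensions
  obtain ⟨Φ, hΦc, hΦe⟩ := statement9_ext (isClosed_Icc (a := (0:ℝ)) (b := ℓ)) hφc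
  obtain ⟨S, hSc, hSe⟩ := statement9_ext (hKc.isClosed) hsc
  obtain ⟨St, hStc, hSte⟩ := statement9_ext (hKc.isClosed) hstc
  obtain ⟨B, hBc, hBe⟩ := statement9_ext (hK3c.isClosed) hA₂c
  -- bounds
  obtain ⟨M1, hM1⟩ := hKc.exists_bound_of_continuousOn hA₁c
  obtain ⟨M2, hM2⟩ := hK3c.exists_bound_of_continuousOn hA₂c
  obtain ⟨M3, hM3⟩ := hKc.exists_bound_of_continuousOn hA₃c
  obtain ⟨Ms, hMs⟩ := hKc.exists_bound_of_continuousOn hsc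
  obtain ⟨Mt, hMt⟩ := hKc.exists_bound_of_continuousOn hstc
  obtain ⟨Mφ, hMφ⟩ := isCompact_Icc.exists_bound_of_continuousOn hφc
  have hMs0 : 0 ≤ Ms := le_trans (norm_nonneg _) (hMs (0, 0) ⟨h0ℓ, h0T⟩)
  have hMt0 : 0 ≤ Mt := le_trans (norm_nonneg _) (hMt (0, 0) ⟨h0ℓ, h0T⟩)
  have hMφ0 : 0 ≤ Mφ := le_trans (norm_nonneg _) (hMφ 0 h0ℓ)
  set M : ℝ := max 1 (max M1 (max M2 M3)) with hMdef
  have hM0 : (0:ℝ) ≤ M := le_trans zero_le_one (le_max_left _ _)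
  have hMA1 : ∀ x ∈ Icc (0:ℝ) ℓ, ∀ t ∈ Icc (0:ℝ) T, |A₁ x t| ≤ M := fun x hx t ht =>
    le_trans (by simpa [Real.norm_eq_abs] using hM1 (x, t) ⟨hx, ht⟩)
      (le_trans (le_max_left _ _) (le_max_right _ _))
  have hMA2 : ∀ x ∈ Icc (0:ℝ) ℓ, ∀ η ∈ Icc (0:ℝ) ℓ, ∀ t ∈ Icc (0:ℝ) T,
      |A₂ x η t| ≤ M := fun x hx η hη t ht =>
    le_trans (by simpa [Real.norm_eq_abs] using hM2 (x, η, t) ⟨hx, hη, ht⟩)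
      (le_trans (le_trans (le_max_left _ _) (le_max_right _ _)) (le_max_right _ _))
  have hMA3 : ∀ x ∈ Icc (0:ℝ) ℓ, ∀ t ∈ Icc (0:ℝ) T, |A₃ x t| ≤ M := fun x hx t ht =>
    le_trans (by simpa [Real.norm_eq_abs] using hM3 (x, t) ⟨hx, ht⟩)
      (le_trans (le_trans (le_max_right _ _) (le_max_right _ _)) (le_max_right _ _))
  -- a helper for integrability of functions continuous on `Icc 0 ℓ`
  have iic : ∀ {f : ℝ → ℝ}, ContinuousOn f (Icc 0 ℓ) → IntervalIntegrable f volume 0 ℓ := by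
    intro f hf
    exact ContinuousOn.intervalIntegrable (by rwa [uIcc_of_le hl'])
  -- slices of jointly continuous functions are continuous
  have slice : ∀ (f : ℝ → ℝ → ℝ),
      ContinuousOn (fun q : ℝ × ℝ => f q.1 q.2) (Icc 0 ℓ ×ˢ Icc 0 T) →
      ∀ t ∈ Icc (0:ℝ) T, ContinuousOn (fun x => f x t) (Icc 0 ℓ) := by
    intro f hf t ht
    exact hf.comp ((continuous_id.prodMk continuous_const).continuousOn)
      (fun x hx => ⟨hx, ht⟩)
  -- the energy
  set E : ℝ → ℝ := fun τ => ∫ x in (0:ℝ)..ℓ, Φ x * S (x, τ) ^ 2 with hEdef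
  have hEcont : Continuous E := by
    apply intervalIntegral.continuous_parametric_intervalIntegral_of_continuous'
      (μ := volume) (f := fun τ x => Φ x * S (x, τ) ^ 2)
    apply Continuous.mul
    · exact hΦc.comp continuous_snd
    · exact (hSc.comp (continuous_snd.prodMk continuous_fst)).pow 2
  -- derivative of the integrand in time
  have hdS : ∀ x ∈ Icc (0:ℝ) ℓ, ∀ τ ∈ Ioo (0:ℝ) T,
      HasDerivAt (fun τ' => Φ x * S (x, τ') ^ 2)
        (Φ x * (2 * S (x, τ) * St (x, τ))) τ := by
    intro x hx τ hτ
    have hτT : τ ∈ Icc (0:ℝ) T := ⟨hτ.1.le, hτ.2.le⟩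
    have hmem : Icc (0:ℝ) T ∈ nhds τ := Icc_mem_nhds hτ.1 hτ.2
    have h1 : HasDerivAt (fun τ' => s x τ') (st x τ) τ := (hst x hx τ hτT).hasDerivAt hmem
    have h2 : HasDerivAt (fun τ' => Φ x * s x τ' ^ 2) (Φ x * (2 * s x τ * st x τ)) τ := by
      have this : HasDerivAt (fun τ' => Φ x * s x τ' ^ 2) _ τ := (h1.pow 2).const_mul (Φ x)
      convert this using 1
      push_cast
      ring
    have h3 : (fun τ' => Φ x * S (x, τ') ^ 2) =ᶠ[nhds τ] fun τ' => Φ x * s x τ' ^ 2 := by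
      filter_upwards [hmem] with τ' hτ'
      rw [hSe (x, τ') ⟨hx, hτ'⟩]
    rw [hSe (x, τ) ⟨hx, hτT⟩, hSte (x, τ) ⟨hx, hτT⟩]
    exact h2.congr_of_eventuallyEq h3
  -- differentiation under the integral sign
  have hED : ∀ t ∈ Ioo (0:ℝ) T,
      HasDerivAt E (∫ x in (0:ℝ)..ℓ, Φ x * (2 * S (x, t) * St (x, t))) t := by
    intro t ht
    have hεpos : 0 < min t (T - t) := lt_min ht.1 (sub_pos.2 ht.2)
    have hball : Metric.ball t (min t (T - t)) ⊆ Ioo (0:ℝ) T := by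
      intro τ hτ
      rw [Metric.mem_ball, Real.dist_eq] at hτ
      have h1 := abs_lt.1 hτ
      constructor
      · linarith [min_le_left t (T - t)]
      · linarith [min_le_right t (T - t)]
    have key := intervalIntegral.hasDerivAt_integral_of_dominated_loc_of_deriv_le
      (𝕜 := ℝ) (μ := volume) (a := 0) (b := ℓ)
      (F := fun τ x => Φ x * S (x, τ) ^ 2)
      (F' := fun τ x => Φ x * (2 * S (x, τ) * St (x, τ)))
      (bound := fun _ => Mφ * (2 * Ms * Mt)) (x₀ := t) (Metric.ball_mem_nhds t hεpos)
      (Filter.Eventually.of_forall fun τ =>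
        (Continuous.aestronglyMeasurable (by
          exact (hΦc.mul ((hSc.comp (continuous_id.prodMk continuous_const)).pow 2)))))
      ((Continuous.intervalIntegrable (by
          exact (hΦc.mul ((hSc.comp (continuous_id.prodMk continuous_const)).pow 2))) _ _))
      (Continuous.aestronglyMeasurable (by
        apply hΦc.mul
        exact (continuous_const.mul
          ((hSc.comp (continuous_id.prodMk continuous_const)))).mul
          (hStc.comp (continuous_id.prodMk continuous_const))))
      ?_ intervalIntegrable_const ?_
    · exact key.2
    · apply MeasureTheory.ae_of_all
      intro x hxI τ hτ
      rw [uIoc_of_le hl'] at hxI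
      have hx : x ∈ Icc (0:ℝ) ℓ := Ioc_subset_Icc_self hxI
      have hτ' : τ ∈ Icc (0:ℝ) T := ⟨(hball hτ).1.le, (hball hτ).2.le⟩
      show ‖Φ x * (2 * S (x, τ) * St (x, τ))‖ ≤ Mφ * (2 * Ms * Mt)
      rw [hSe (x, τ) ⟨hx, hτ'⟩, hSte (x, τ) ⟨hx, hτ'⟩]
      have e1 : |Φ x| ≤ Mφ := by
        rw [hΦe x hx]; simpa [Real.norm_eq_abs] using hMφ x hx
      have e2 : |s x τ| ≤ Ms := by simpa [Real.norm_eq_abs] using hMs (x, τ) ⟨hx, hτ'⟩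
      have e3 : |st x τ| ≤ Mt := by simpa [Real.norm_eq_abs] using hMt (x, τ) ⟨hx, hτ'⟩
      have h4 : |s x τ| * |st x τ| ≤ Ms * Mt :=
        mul_le_mul e2 e3 (abs_nonneg _) hMs0
      calc ‖Φ x * (2 * s x τ * st x τ)‖
          = |Φ x| * (2 * (|s x τ| * |st x τ|)) := by
            rw [Real.norm_eq_abs, abs_mul, abs_mul, abs_mul, abs_two]; ring
        _ ≤ Mφ * (2 * (Ms * Mt)) := by
            apply mul_le_mul e1 (by linarith) (by positivity) hMφ0
        _ = Mφ * (2 * Ms * Mt) := by ring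
    · apply MeasureTheory.ae_of_all
      intro x hxI τ hτ
      rw [uIoc_of_le hl'] at hxI
      exact hdS x (Ioc_subset_Icc_self hxI) τ (hball hτ)
  -- the main energy estimate
  set K₁ : ℝ := M ^ 2 / c + 2 * M * ℓ + 2 * M with hK₁def
  have hK₁0 : 0 ≤ K₁ := by
    have h1 : 0 ≤ M ^ 2 / c := div_nonneg (sq_nonneg M) hc.le
    have h2 : 0 ≤ 2 * M * ℓ := by positivity
    have h3 : 0 ≤ 2 * M := by positivity
    rw [hK₁def]; linarith
  have hEb : ∀ t ∈ Ioo (0:ℝ) T,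
      (∫ x in (0:ℝ)..ℓ, Φ x * (2 * S (x, t) * St (x, t))) ≤ K₁ / c₀ * E t := by
    intro t ht
    have htIcc : t ∈ Icc (0:ℝ) T := ⟨ht.1.le, ht.2.le⟩
    have cs := slice s hsc t htIcc
    have cst := slice st hstc t htIcc
    have csx := slice sx hsxc t htIcc
    have cGx := slice Gx hGxc t htIcc
    have cD := slice D hDc t htIcc
    have cA1 := slice A₁ hA₁c t htIcc
    have cA3 := slice A₃ hA₃c t htIcc
    set J : ℝ := ∫ x in (0:ℝ)..ℓ, (s x t) ^ 2 with hJdef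
    have hJ0 : 0 ≤ J := intervalIntegral.integral_nonneg hl' fun u hu => sq_nonneg _
    set N : ℝ → ℝ := fun x => ∫ η in (0:ℝ)..ℓ, B (x, η, t) * S (η, t) with hNdef
    have hNcont : Continuous N := by
      apply intervalIntegral.continuous_parametric_intervalIntegral_of_continuous'
        (μ := volume) (f := fun x η => B (x, η, t) * S (η, t))
      apply Continuous.mul
      · exact hBc.comp (continuous_fst.prodMk (continuous_snd.prodMk continuous_const))
      · exact hSc.comp (continuous_snd.prodMk continuous_const)
    have hJE : c₀ * J ≤ E t := by
      have h1 : c₀ * J = ∫ x in (0:ℝ)..ℓ, c₀ * (s x t) ^ 2 :=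
        (intervalIntegral.integral_const_mul _ _).symm
      rw [h1]
      show _ ≤ ∫ x in (0:ℝ)..ℓ, Φ x * S (x, t) ^ 2
      apply intervalIntegral.integral_mono_on hl'
        (iic (continuousOn_const.mul (cs.pow 2)))
        (Continuous.intervalIntegrable
          (hΦc.mul ((hSc.comp (continuous_id.prodMk continuous_const)).pow 2)) _ _)
      intro u hu
      show c₀ * s u t ^ 2 ≤ Φ u * S (u, t) ^ 2
      rw [hΦe u hu, hSe (u, t) ⟨hu, htIcc⟩]
      exact mul_le_mul_of_nonneg_right (hφ u hu) (sq_nonneg _)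
    have hNeq : ∀ x ∈ Ioo (0:ℝ) ℓ,
        φ x * st x t = Gx x t + N x + A₃ x t * s x t := by
      intro x hx
      have h := heq x hx t ⟨ht.1, ht.2.le⟩
      have h2 : (∫ η in (0:ℝ)..ℓ, A₂ x η t * s η t) = N x := by
        apply intervalIntegral.integral_congr
        intro η hη
        rw [uIcc_of_le hl'] at hη
        show A₂ x η t * s η t = B (x, η, t) * S (η, t)
        rw [hBe (x, η, t) ⟨Ioo_subset_Icc_self hx, hη, htIcc⟩, hSe (η, t) ⟨hη, htIcc⟩]
      rw [← h2]
      exact h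
    have hcongr1 : (∫ x in (0:ℝ)..ℓ, Φ x * (2 * S (x, t) * St (x, t)))
        = ∫ x in (0:ℝ)..ℓ, 2 * s x t * (φ x * st x t) := by
      apply intervalIntegral.integral_congr
      intro x hx
      rw [uIcc_of_le hl'] at hx
      show Φ x * (2 * S (x, t) * St (x, t)) = 2 * s x t * (φ x * st x t)
      rw [hSe (x, t) ⟨hx, htIcc⟩, hSte (x, t) ⟨hx, htIcc⟩, hΦe x hx]
      ring
    have hcongr2 : (∫ x in (0:ℝ)..ℓ, 2 * s x t * (φ x * st x t))
        = ∫ x in (0:ℝ)..ℓ,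
          (2 * s x t * Gx x t + 2 * s x t * N x + 2 * A₃ x t * s x t ^ 2) := by
      apply intervalIntegral.integral_congr_ae
      have hne : ∀ᵐ (x : ℝ), x ≠ ℓ := by rw [ae_iff]; simp only [not_not, setOf_eq_eq_singleton]; exact Real.volume_singleton
      filter_upwards [hne] with x hxne hxI
      rw [uIoc_of_le hl'] at hxI
      have hx : x ∈ Ioo (0:ℝ) ℓ := ⟨hxI.1, lt_of_le_of_ne hxI.2 hxne⟩
      rw [hNeq x hx]
      ring
    have i1 : IntervalIntegrable (fun x => 2 * s x t * Gx x t) volume 0 ℓ :=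
      iic ((continuousOn_const.mul cs).mul cGx)
    have i2 : IntervalIntegrable (fun x => 2 * s x t * N x) volume 0 ℓ :=
      iic ((continuousOn_const.mul cs).mul hNcont.continuousOn)
    have i3 : IntervalIntegrable (fun x => 2 * A₃ x t * s x t ^ 2) volume 0 ℓ :=
      iic ((continuousOn_const.mul cA3).mul (cs.pow 2))
    have hsplit : (∫ x in (0:ℝ)..ℓ,
          (2 * s x t * Gx x t + 2 * s x t * N x + 2 * A₃ x t * s x t ^ 2))
        = (∫ x in (0:ℝ)..ℓ, 2 * s x t * Gx x t) + (∫ x in (0:ℝ)..ℓ, 2 * s x t * N x)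
          + ∫ x in (0:ℝ)..ℓ, 2 * A₃ x t * s x t ^ 2 := by
      rw [intervalIntegral.integral_add (i1.add i2) i3, intervalIntegral.integral_add i1 i2]
    have iP : IntervalIntegrable
        (fun x => sx x t * (D x t * sx x t + A₁ x t * s x t)) volume 0 ℓ :=
      iic (csx.mul ((cD.mul csx).add (cA1.mul cs)))
    have iQ : IntervalIntegrable (fun x => s x t * Gx x t) volume 0 ℓ := iic (cs.mul cGx)
    have hIBP : (∫ x in (0:ℝ)..ℓ,
        (sx x t * (D x t * sx x t + A₁ x t * s x t) + s x t * Gx x t)) = 0 := by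
      have hd : ∀ x ∈ Ioo (0:ℝ) ℓ,
          HasDerivWithinAt (fun y => s y t * (D y t * sx y t + A₁ y t * s y t))
            (sx x t * (D x t * sx x t + A₁ x t * s x t) + s x t * Gx x t) (Ioi x) x := by
        intro x hx
        have h1 := (hsx x (Ioo_subset_Icc_self hx) t htIcc).mul
          (hGx x (Ioo_subset_Icc_self hx) t htIcc)
        exact (h1.hasDerivAt (Icc_mem_nhds hx.1 hx.2)).hasDerivWithinAt
      rw [intervalIntegral.integral_eq_sub_of_hasDeriv_right_of_le hl'
        (cs.mul ((cD.mul csx).add (cA1.mul cs))) hd (iP.add iQ)]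
      simp only [Pi.mul_apply, Pi.add_apply]
      rw [(hbc t htIcc).1, (hbc t htIcc).2]
      ring
    have hQ : (∫ x in (0:ℝ)..ℓ, s x t * Gx x t)
        = -∫ x in (0:ℝ)..ℓ, sx x t * (D x t * sx x t + A₁ x t * s x t) := by
      have h := hIBP
      rw [intervalIntegral.integral_add iP iQ] at h
      linarith
    have hI1 : (∫ x in (0:ℝ)..ℓ, 2 * s x t * Gx x t) ≤ M ^ 2 / c * J := by
      have e1 : (∫ x in (0:ℝ)..ℓ, 2 * s x t * Gx x t)
          = 2 * ∫ x in (0:ℝ)..ℓ, s x t * Gx x t := by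
        rw [← intervalIntegral.integral_const_mul]
        apply intervalIntegral.integral_congr
        intro x hx
        show 2 * s x t * Gx x t = 2 * (s x t * Gx x t)
        ring
      rw [e1, hQ]
      have e2 : 2 * -(∫ x in (0:ℝ)..ℓ, sx x t * (D x t * sx x t + A₁ x t * s x t))
          = ∫ x in (0:ℝ)..ℓ, (-2) * (sx x t * (D x t * sx x t + A₁ x t * s x t)) := by
        rw [intervalIntegral.integral_const_mul]
        ring
      rw [e2]
      have e3 : M ^ 2 / c * J = ∫ x in (0:ℝ)..ℓ, M ^ 2 / c * s x t ^ 2 :=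
        (intervalIntegral.integral_const_mul _ _).symm
      rw [e3]
      apply intervalIntegral.integral_mono_on hl' (iP.const_mul _)
        (iic (continuousOn_const.mul (cs.pow 2)))
      intro x hx
      show (-2) * (sx x t * (D x t * sx x t + A₁ x t * s x t)) ≤ M ^ 2 / c * s x t ^ 2
      have h := statement9_quad1 (a := sx x t) (b := s x t) hc (hDpos x hx t htIcc)
        (hMA1 x hx t htIcc)
      linarith
    have hI2 : (∫ x in (0:ℝ)..ℓ, 2 * s x t * N x) ≤ 2 * M * ℓ * J := by
      have hpt : ∀ x ∈ Icc (0:ℝ) ℓ, 2 * s x t * N x ≤ M * (ℓ * s x t ^ 2 + J) := by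
        intro x hx
        have e1 : 2 * s x t * N x
            = ∫ η in (0:ℝ)..ℓ, 2 * s x t * (B (x, η, t) * S (η, t)) :=
          (intervalIntegral.integral_const_mul _ _).symm
        have e2 : M * (ℓ * s x t ^ 2 + J)
            = ∫ η in (0:ℝ)..ℓ, M * (s x t ^ 2 + s η t ^ 2) := by
          rw [intervalIntegral.integral_const_mul, intervalIntegral.integral_add
            intervalIntegrable_const (iic (cs.pow 2) : IntervalIntegrable (fun η => s η t ^ 2) volume 0 ℓ), intervalIntegral.integral_const,
            hJdef]
          simp [smul_eq_mul]
        rw [e1, e2]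
        apply intervalIntegral.integral_mono_on hl'
          (Continuous.intervalIntegrable (by
            apply Continuous.mul continuous_const
            apply Continuous.mul
            · exact hBc.comp (continuous_const.prodMk (continuous_id.prodMk continuous_const))
            · exact hSc.comp (continuous_id.prodMk continuous_const)) _ _)
          (iic (continuousOn_const.mul (continuousOn_const.add (cs.pow 2))))
        intro η hη
        show 2 * s x t * (B (x, η, t) * S (η, t)) ≤ M * (s x t ^ 2 + s η t ^ 2)
        rw [hBe (x, η, t) ⟨hx, hη, htIcc⟩, hSe (η, t) ⟨hη, htIcc⟩]
        exact statement9_quad2 (hMA2 x hx η hη t htIcc)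
      calc (∫ x in (0:ℝ)..ℓ, 2 * s x t * N x)
          ≤ ∫ x in (0:ℝ)..ℓ, M * (ℓ * s x t ^ 2 + J) := by
            apply intervalIntegral.integral_mono_on hl' i2
              (iic (continuousOn_const.mul
                ((continuousOn_const.mul (cs.pow 2)).add continuousOn_const))) hpt
        _ = M * (ℓ * J + ℓ * J) := by
            rw [intervalIntegral.integral_const_mul, intervalIntegral.integral_add
              ((iic (cs.pow 2) : IntervalIntegrable (fun x => s x t ^ 2) volume 0 ℓ).const_mul ℓ) intervalIntegrable_const,
              intervalIntegral.integral_const_mul, intervalIntegral.integral_const,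
              hJdef]
            simp [smul_eq_mul]
        _ ≤ 2 * M * ℓ * J := le_of_eq (by ring)
    have hI3 : (∫ x in (0:ℝ)..ℓ, 2 * A₃ x t * s x t ^ 2) ≤ 2 * M * J := by
      have e1 : 2 * M * J = ∫ x in (0:ℝ)..ℓ, 2 * M * s x t ^ 2 :=
        (intervalIntegral.integral_const_mul _ _).symm
      rw [e1]
      apply intervalIntegral.integral_mono_on hl' i3
        (iic (continuousOn_const.mul (cs.pow 2)))
      intro x hx
      show 2 * A₃ x t * s x t ^ 2 ≤ 2 * M * s x t ^ 2
      have h := abs_le.1 (hMA3 x hx t htIcc)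
      nlinarith [sq_nonneg (s x t)]
    have hJle : J ≤ E t / c₀ := (le_div_iff₀ hc₀).2 (by linarith)
    calc (∫ x in (0:ℝ)..ℓ, Φ x * (2 * S (x, t) * St (x, t)))
        = (∫ x in (0:ℝ)..ℓ, 2 * s x t * Gx x t) + (∫ x in (0:ℝ)..ℓ, 2 * s x t * N x)
          + ∫ x in (0:ℝ)..ℓ, 2 * A₃ x t * s x t ^ 2 := by
          rw [hcongr1, hcongr2, hsplit]
      _ ≤ M ^ 2 / c * J + 2 * M * ℓ * J + 2 * M * J := by linarith
      _ = K₁ * J := by rw [hK₁def]; ring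
      _ ≤ K₁ * (E t / c₀) := mul_le_mul_of_nonneg_left hJle hK₁0
      _ = K₁ / c₀ * E t := by ring
  -- Gronwall-type argument via a decreasing auxiliary function
  set C : ℝ := K₁ / c₀ with hCdef
  have hF : ∀ τ : ℝ, HasDerivAt (fun u => Real.exp (-C * u)) (Real.exp (-C * τ) * -C) τ := by
    intro τ
    have h1 : HasDerivAt (fun u : ℝ => -C * u) (-C) τ := by
      simpa using (hasDerivAt_id τ).const_mul (-C)
    exact h1.exp
  have hEnn : ∀ τ ∈ Icc (0:ℝ) T, 0 ≤ E τ := by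
    intro τ hτ
    show (0:ℝ) ≤ ∫ x in (0:ℝ)..ℓ, Φ x * S (x, τ) ^ 2
    apply intervalIntegral.integral_nonneg hl'
    intro u hu
    have h1 : 0 ≤ Φ u := by rw [hΦe u hu]; linarith [hφ u hu]
    exact mul_nonneg h1 (sq_nonneg _)
  have hanti : AntitoneOn (fun τ => E τ * Real.exp (-C * τ)) (Icc 0 T) := by
    apply antitoneOn_of_deriv_nonpos (convex_Icc 0 T)
    · exact (hEcont.mul
        (Real.continuous_exp.comp (continuous_const.mul continuous_id))).continuousOn
    · rw [interior_Icc]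
      intro τ hτ
      exact ((hED τ hτ).mul (hF τ)).differentiableAt.differentiableWithinAt
    · rw [interior_Icc]
      intro τ hτ
      have hd : HasDerivAt (fun τ => E τ * Real.exp (-C * τ)) _ τ := (hED τ hτ).mul (hF τ)
      rw [hd.deriv]
      have h1 := hEb τ hτ
      have h2 : (0:ℝ) < Real.exp (-C * τ) := Real.exp_pos _
      nlinarith [mul_le_mul_of_nonneg_right h1 h2.le]
  have hE0 : E 0 = 0 := by
    show (∫ x in (0:ℝ)..ℓ, Φ x * S (x, 0) ^ 2) = 0
    have h1 : EqOn (fun x => Φ x * S (x, 0) ^ 2) (fun _ => (0:ℝ)) (uIcc 0 ℓ) := by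
      intro x hx
      rw [uIcc_of_le hl'] at hx
      show Φ x * S (x, 0) ^ 2 = 0
      rw [hSe (x, 0) ⟨hx, h0T⟩]
      show Φ x * s x 0 ^ 2 = 0
      rw [hic x hx]
      ring
    rw [intervalIntegral.integral_congr h1]
    simp
  have hEzero : ∀ τ ∈ Icc (0:ℝ) T, E τ = 0 := by
    intro τ hτ
    have h1 : E τ * Real.exp (-C * τ) ≤ E 0 * Real.exp (-C * 0) :=
      hanti ⟨le_refl 0, hT'⟩ hτ hτ.1
    rw [hE0, zero_mul] at h1
    have h2 := Real.exp_pos (-C * τ)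
    have h3 := hEnn τ hτ
    nlinarith
  -- conclusion
  intro x hx t ht
  rcases eq_or_lt_of_le hx.1 with h0 | h0
  · rw [← h0]; exact (hbc t ht).1
  rcases eq_or_lt_of_le hx.2 with hℓ | hℓ
  · rw [hℓ]; exact (hbc t ht).2
  have hxI : x ∈ Ioo (0:ℝ) ℓ := ⟨h0, hℓ⟩
  by_contra hne
  have cs := slice s hsc t ht
  have hcf : ContinuousOn (fun y => φ y * s y t ^ 2) (Icc 0 ℓ) := hφc.mul (cs.pow 2)
  have hrepr : E t = ∫ y in (0:ℝ)..ℓ, φ y * s y t ^ 2 := by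
    show (∫ y in (0:ℝ)..ℓ, Φ y * S (y, t) ^ 2) = _
    apply intervalIntegral.integral_congr
    intro y hy
    rw [uIcc_of_le hl'] at hy
    show Φ y * S (y, t) ^ 2 = φ y * s y t ^ 2
    rw [hΦe y hy, hSe (y, t) ⟨hy, ht⟩]
  have hfx : 0 < φ x * s x t ^ 2 :=
    mul_pos (lt_of_lt_of_le hc₀ (hφ x hx))
      (lt_of_le_of_ne (sq_nonneg _) (Ne.symm (pow_ne_zero 2 hne)))
  have hfa : ContinuousAt (fun y => φ y * s y t ^ 2) x :=
    hcf.continuousAt (Icc_mem_nhds hxI.1 hxI.2)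
  obtain ⟨V, hVsub, hVopen, hxV⟩ := mem_nhds_iff.1
    (Filter.inter_mem (hfa.preimage_mem_nhds (Ioi_mem_nhds hfx))
      (isOpen_Ioo.mem_nhds hxI))
  have hVIoc : V ⊆ Ioc 0 ℓ := fun y hy => Ioo_subset_Ioc_self (hVsub hy).2
  have hint : IntegrableOn (fun y => φ y * s y t ^ 2) (Ioc 0 ℓ) volume := by
    have h1 := iic hcf
    rwa [intervalIntegrable_iff_integrableOn_Ioc_of_le hl'] at h1
  have h0int : (∫ y in Ioc (0:ℝ) ℓ, φ y * s y t ^ 2) = 0 := by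
    rw [← intervalIntegral.integral_of_le hl', ← hrepr]
    exact hEzero t ht
  have hnn : 0 ≤ᵐ[volume.restrict (Ioc (0:ℝ) ℓ)] fun y => φ y * s y t ^ 2 := by
    apply MeasureTheory.ae_restrict_of_forall_mem measurableSet_Ioc
    intro y hy
    show (0:ℝ → ℝ) y ≤ φ y * s y t ^ 2
    simp only [Pi.zero_apply]
    exact mul_nonneg (le_trans hc₀.le (hφ y (Ioc_subset_Icc_self hy))) (sq_nonneg _)
  have hae0 := (MeasureTheory.integral_eq_zero_iff_of_nonneg_ae hnn hint).1 h0int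
  have h2 : ∀ᵐ y ∂(volume.restrict (Ioc (0:ℝ) ℓ)), y ∉ V := by
    filter_upwards [hae0] with y hy hyV
    have h5 := (hVsub hyV).1
    rw [mem_preimage, mem_Ioi] at h5
    simp only [Pi.zero_apply] at hy
    exact absurd hy (ne_of_gt h5)
  have h3 := ae_iff.1 h2
  simp only [not_not] at h3
  have h4 : volume V = 0 := by
    have h6 : (volume.restrict (Ioc (0:ℝ) ℓ)) V = 0 := h3
    rwa [Measure.restrict_apply hVopen.measurableSet, inter_eq_left.2 hVIoc] at h6
  exact absurd h4 (hVopen.measure_pos volume ⟨x, hxV⟩).ne'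
end
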